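/- If n ≥ 2k − 1 and k ≥ 1, then M^[k](1, n) = ⌈n/k⌉ − 2 + ⌈log₂(n − (⌈n/k⌉ − 2)·k)⌉. -/

import Mathlib

/-- An adaptive group-testing strategy on a population of `n` items:
a binary decision tree whose internal nodes test a subset (branching on
contaminated / pure) and whose leaves output a guess for the defective set. -/
inductive GTTree (n : ℕ) : Type where
  | leaf (guess : Finset (Fin n)) : GTTree n
  | node (test : Finset (Fin n)) (pos neg : GTTree n) : GTTree n

/-- Run the strategy when the true defective set is `D`. -/
def GTTree.run {n : ℕ} (D : Finset (Fin n)) : GTTree n → Finset (Fin n)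
  | .leaf g => g
  | .node t p q => if (t ∩ D).Nonempty then p.run D else q.run D

/-- Worst-case number of tests performed by the strategy. -/
def GTTree.depth {n : ℕ} : GTTree n → ℕ
  | .leaf _ => 0
  | .node _ p q => max p.depth q.depth + 1

/-- The strategy correctly identifies every possible defective set of size `d`. -/
def GTTree.Solves {n : ℕ} (T : GTTree n) (d : ℕ) : Prop :=
  ∀ D : Finset (Fin n), D.card = d → T.run D = D

/-- Every test set occurring in the tree has size exactly `k`. -/
def GTTree.SizeK {n : ℕ} (k : ℕ) : GTTree n → Prop
  | .leaf _ => True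
  | .node t p q => t.card = k ∧ p.SizeK k ∧ q.SizeK k

/-- `M d n`: optimal worst-case number of adaptive tests to find the `d`
defectives among `n` items, test sets of arbitrary size (`⊤` if unsolvable). -/
noncomputable def M (d n : ℕ) : ℕ∞ :=
  sInf {c : ℕ∞ | ∃ T : GTTree n, T.Solves d ∧ (T.depth : ℕ∞) = c}

/-- `Mfix k d n`: optimal worst-case number of adaptive tests to find the `d`
defectives among `n` items, every test set of size exactly `k` (`⊤` if unsolvable). -/
noncomputable def Mfix (k d n : ℕ) : ℕ∞ :=
  sInf {c : ℕ∞ | ∃ T : GTTree n, T.SizeK k ∧ T.Solves d ∧ (T.depth : ℕ∞) = c}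

def F (k : ℕ) (m : ℕ) : ℕ :=
  if m ≤ 1 then 0 else
    1 + max (F k (max 1 (min k ((m+1)/2)))) (F k (m - max 1 (min k ((m+1)/2))))
termination_by m
decreasing_by all_goals omega

lemma F_le_one {k m : ℕ} (h : m ≤ 1) : F k m = 0 := by rw [F, if_pos h]

lemma F_ge_two {k m : ℕ} (h : 2 ≤ m) :
    F k m = 1 + max (F k (max 1 (min k ((m+1)/2)))) (F k (m - max 1 (min k ((m+1)/2)))) := by
  rw [F, if_neg (by omega)]

lemma F_succ_le {k : ℕ} (hk : 1 ≤ k) : ∀ m, F k m ≤ F k (m+1) := by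
  intro m
  induction m using Nat.strong_induction_on with
  | _ m IH =>
    have mono : ∀ b, b ≤ m → ∀ a, a ≤ b → F k a ≤ F k b := by
      intro b hb
      induction b with
      | zero => intro a ha; simp [Nat.le_zero.mp ha]
      | succ c ihc =>
        intro a ha
        rcases Nat.lt_or_ge a (c+1) with h | h
        · exact le_trans (ihc (by omega) a (by omega)) (IH c (by omega))
        · have : a = c + 1 := by omega
          simp [this]
    by_cases hm : m ≤ 1
    · simp [F_le_one hm]
    · rw [F_ge_two (by omega), F_ge_two (by omega : 2 ≤ m + 1)]
      have h1 : F k (max 1 (min k ((m+1)/2))) ≤ F k (max 1 (min k ((m+1+1)/2))) :=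
        mono _ (by omega) _ (by omega)
      have h2 : F k (m - max 1 (min k ((m+1)/2))) ≤ F k (m+1 - max 1 (min k ((m+1+1)/2))) :=
        mono _ (by omega) _ (by omega)
      exact Nat.add_le_add_left (max_le_max h1 h2) 1

lemma F_mono {k : ℕ} (hk : 1 ≤ k) : Monotone (F k) :=
  monotone_nat_of_le_succ (F_succ_le hk)

lemma F_eq_clog {k : ℕ} (hk : 1 ≤ k) : ∀ m, m ≤ 2*k → F k m = Nat.clog 2 m := by
  intro m
  induction m using Nat.strong_induction_on with
  | _ m IH =>
    intro hm
    by_cases h1 : m ≤ 1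
    · interval_cases m <;> simp [F_le_one]
    · have hs : max 1 (min k ((m+1)/2)) = (m+1)/2 := by omega
      rw [F_ge_two (by omega), hs, IH _ (by omega) (by omega), IH _ (by omega) (by omega)]
      have : Nat.clog 2 (m - (m+1)/2) ≤ Nat.clog 2 ((m+1)/2) :=
        Nat.clog_mono_right 2 (by omega)
      rw [max_eq_left this]
      conv_rhs => rw [Nat.clog_of_two_le one_lt_two (by omega)]
      rw [show m + 2 - 1 = m + 1 from rfl]
      omega

lemma F_peel {k : ℕ} (hk : 1 ≤ k) {m : ℕ} (hm : 2*k < m) : F k m = 1 + F k (m - k) := by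
  have hs : max 1 (min k ((m+1)/2)) = k := by omega
  rw [F_ge_two (by omega), hs]
  have : F k k ≤ F k (m - k) := F_mono hk (by omega)
  rw [max_eq_right this]

lemma F_key {k : ℕ} (hk : 1 ≤ k) {a b : ℕ} (ha : a ≤ k) :
    F k (a + b) ≤ 1 + max (F k a) (F k b) := by
  set m := a + b with hm
  by_cases h1 : m ≤ 1
  · simp [F_le_one h1]
  · rw [F_ge_two (by omega)]
    set s := max 1 (min k ((m+1)/2)) with hsdef
    have hL : F k s ≤ max (F k a) (F k b) := by
      rcases Nat.lt_or_ge a s with h | h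
      · exact le_max_of_le_right (F_mono hk (by omega))
      · exact le_max_of_le_left (F_mono hk h)
    have hR : F k (m - s) ≤ max (F k a) (F k b) := by
      rcases Nat.lt_or_ge s a with h | h
      · exact le_max_of_le_left (F_mono hk (by omega))
      · exact le_max_of_le_right (F_mono hk (by omega))
    exact Nat.add_le_add_left (max_le hL hR) 1

lemma F_formula {k : ℕ} (hk : 1 ≤ k) : ∀ n, k < n →
    F k n = ((n + k - 1)/k - 2) + Nat.clog 2 (n - ((n + k - 1)/k - 2) * k) := by
  intro n
  induction n using Nat.strong_induction_on with
  | _ n IH =>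
    intro hkn
    rcases Nat.lt_or_ge (2*k) n with h2 | h2
    · rw [F_peel hk h2, IH (n - k) (by omega) (by omega)]
      set q' := (n - k + k - 1)/k with hq'def
      have e3 : n - k + k - 1 = n - k - 1 + k := by omega
      have hq'val : q' = (n - k - 1) / k + 1 := by
        rw [hq'def, e3, Nat.add_div_right _ (by omega)]
      have hq : (n + k - 1)/k = q' + 1 := by
        have e1 : n + k - 1 = (n - 1) + k := by omega
        have e2 : n - 1 = (n - k - 1) + k := by omega
        rw [e1, Nat.add_div_right _ (by omega), e2, Nat.add_div_right _ (by omega), hq'val]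
      have hq2 : 2 ≤ q' := by
        have : 1 ≤ (n - k - 1) / k := (Nat.one_le_div_iff (by omega)).mpr (by omega)
        omega
      have hqk : (q' - 1) * k ≤ n - k - 1 := by
        have := Nat.div_mul_le_self (n - k - 1) k
        have e4 : q' - 1 = (n - k - 1) / k := by omega
        rw [e4]; exact this
      have hsplit : (q' - 1) * k = (q' - 2) * k + k := by
        rw [show q' - 1 = (q' - 2) + 1 by omega, add_mul, one_mul]
      rw [hq]
      have e6 : n - (q' + 1 - 2) * k = n - k - (q' - 2) * k := by
        have h1 : (q' + 1 - 2) * k = (q' - 2) * k + k := by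
          rw [show q' + 1 - 2 = (q' - 2) + 1 by omega, add_mul, one_mul]
        omega
      rw [e6]
      omega
    · have hq : (n + k - 1)/k = 2 := Nat.div_eq_of_lt_le (by omega) (by omega)
      rw [F_eq_clog hk n h2, hq]
      simp

/-- Pick a subset of `C` of size `i` (if possible). -/
noncomputable def pick {α : Type*} (C : Finset α) (i : ℕ) : Finset α :=
  if h : i ≤ C.card then (Finset.exists_subset_card_eq h).choose else C

lemma pick_subset {α : Type*} (C : Finset α) (i : ℕ) : pick C i ⊆ C := by
  rw [pick]
  split
  · exact (Finset.exists_subset_card_eq ‹i ≤ C.card›).choose_spec.1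
  · exact Finset.Subset.refl C

lemma pick_card {α : Type*} {C : Finset α} {i : ℕ} (h : i ≤ C.card) : (pick C i).card = i := by
  rw [pick, dif_pos h]
  exact (Finset.exists_subset_card_eq h).choose_spec.2

/-- The binary-search strategy on candidate set `C` with tests of size `k`. -/
noncomputable def build (k : ℕ) {n : ℕ} (C : Finset (Fin n)) : GTTree n :=
  if h : C.card ≤ 1 then .leaf C else
    .node (pick C (max 1 (min k ((C.card + 1)/2)))
            ∪ pick (Finset.univ \ C) (min (k - max 1 (min k ((C.card + 1)/2))) (Finset.univ \ C).card))
      (build k (pick C (max 1 (min k ((C.card + 1)/2)))))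
      (build k (C \ pick C (max 1 (min k ((C.card + 1)/2)))))
termination_by C.card
decreasing_by
  · rw [pick_card (by omega)]; omega
  · have h1 : (pick C (max 1 (min k ((C.card + 1)/2)))).card = max 1 (min k ((C.card + 1)/2)) :=
      pick_card (by omega)
    have h2 := Finset.card_sdiff_of_subset (pick_subset C (max 1 (min k ((C.card + 1)/2))))
    omega

lemma build_run {k : ℕ} (hk : 1 ≤ k) {n : ℕ} :
    ∀ m (C : Finset (Fin n)), C.card ≤ m → ∀ x ∈ C, (build k C).run {x} = {x} := by
  intro m
  induction m with
  | zero =>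
    intro C hC x hx
    have : C = ∅ := Finset.card_eq_zero.mp (by omega)
    simp [this] at hx
  | succ m ih =>
    intro C hC x hx
    rw [build]
    split
    · next h =>
      have hCx : C = {x} := by
        apply Finset.eq_singleton_iff_unique_mem.mpr
        refine ⟨hx, fun y hy => ?_⟩
        by_contra hne
        have := Finset.one_lt_card.mpr ⟨y, hy, x, hx, hne⟩
        omega
      simp [GTTree.run, hCx]
    · next h =>
      set s := max 1 (min k ((C.card + 1)/2)) with hs
      have hsle : s ≤ C.card := by omega
      have hScard : (pick C s).card = s := pick_card hsle
      simp only [GTTree.run]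
      by_cases hxS : x ∈ pick C s
      · rw [if_pos ⟨x, Finset.mem_inter.mpr ⟨Finset.mem_union_left _ hxS,
          Finset.mem_singleton_self x⟩⟩]
        exact ih (pick C s) (by omega) x hxS
      · have hnot : x ∉ pick (Finset.univ \ C)
            (min (k - s) (Finset.univ \ C).card) := fun hxP =>
          (Finset.mem_sdiff.mp (pick_subset _ _ hxP)).2 hx
        rw [if_neg (by
          rintro ⟨y, hy⟩
          rcases Finset.mem_inter.mp hy with ⟨hyu, hyx⟩
          rcases Finset.mem_union.mp hyu with h' | h' <;>
            rw [Finset.mem_singleton.mp hyx] at h' <;> [exact hxS h'; exact hnot h'])]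
        have h2 : (C \ pick C s).card = C.card - s := by
          rw [Finset.card_sdiff_of_subset (pick_subset C s), hScard]
        exact ih (C \ pick C s) (by omega) x (Finset.mem_sdiff.mpr ⟨hx, hxS⟩)

lemma build_depth {k : ℕ} (hk : 1 ≤ k) {n : ℕ} :
    ∀ m (C : Finset (Fin n)), C.card ≤ m → (build k C).depth = F k C.card := by
  intro m
  induction m with
  | zero =>
    intro C hC
    rw [build, dif_pos (by omega)]
    simp [GTTree.depth, F_le_one (by omega : C.card ≤ 1)]
  | succ m ih =>
    intro C hC
    rw [build]
    split
    · next h => simp [GTTree.depth, F_le_one h]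
    · next h =>
      set s := max 1 (min k ((C.card + 1)/2)) with hs
      have hsle : s ≤ C.card := by omega
      have h1 : (pick C s).card = s := pick_card hsle
      have h2 : (C \ pick C s).card = C.card - s := by
        rw [Finset.card_sdiff_of_subset (pick_subset C s), h1]
      simp only [GTTree.depth]
      rw [ih (pick C s) (by rw [h1]; omega), ih (C \ pick C s) (by rw [h2]; omega),
        h1, h2, F_ge_two (k := k) (m := C.card) (by omega), ← hs]
      omega

lemma build_sizeK {k n : ℕ} (hk : 1 ≤ k) (hn : 2*k - 1 ≤ n) :
    ∀ m (C : Finset (Fin n)), C.card ≤ m → (build k C).SizeK k := by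
  intro m
  induction m with
  | zero => intro C hC; rw [build, dif_pos (by omega)]; trivial
  | succ m ih =>
    intro C hC
    rw [build]
    split
    · trivial
    · next h =>
      set s := max 1 (min k ((C.card + 1)/2)) with hs
      have hCle : C.card ≤ n := by simpa using Finset.card_le_univ C
      have hsle : s ≤ C.card := by omega
      have hcompl : (Finset.univ \ C).card = n - C.card := by
        rw [Finset.card_sdiff_of_subset (Finset.subset_univ C)]
        simp
      have hpad : k - s ≤ (Finset.univ \ C).card := by omega
      have h1 : (pick C s).card = s := pick_card hsle
      have h2 : (C \ pick C s).card = C.card - s := by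
        rw [Finset.card_sdiff_of_subset (pick_subset C s), h1]
      refine ⟨?_, ih _ (by omega), ih _ (by omega)⟩
      have hdisj : Disjoint (pick C s)
          (pick (Finset.univ \ C) (min (k - s) (Finset.univ \ C).card)) :=
        Finset.disjoint_sdiff.mono (pick_subset _ _) (pick_subset _ _)
      rw [Finset.card_union_of_disjoint hdisj, h1,
        pick_card (min_le_right _ _)]
      omega

lemma lower_bound {k n : ℕ} (hk : 1 ≤ k) :
    ∀ T : GTTree n, T.SizeK k → ∀ C : Finset (Fin n),
      (∀ x ∈ C, T.run {x} = {x}) → F k C.card ≤ T.depth := by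
  intro T
  induction T with
  | leaf g =>
    intro _ C hC
    have hcc : C.card ≤ 1 := by
      by_contra hc
      obtain ⟨x, hx, y, hy, hxy⟩ := Finset.one_lt_card.mp (show 1 < C.card by omega)
      have h1 := hC x hx
      have h2 := hC y hy
      simp only [GTTree.run] at h1 h2
      rw [h1] at h2
      exact hxy (Finset.singleton_inj.mp h2)
    simp [GTTree.depth, F_le_one hcc]
  | node t p q ihp ihq =>
    rintro ⟨htk, hp, hq⟩ C hC
    have hA : ∀ x ∈ C ∩ t, p.run {x} = {x} := by
      intro x hx
      rcases Finset.mem_inter.mp hx with ⟨hxC, hxt⟩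
      have h := hC x hxC
      simp only [GTTree.run] at h
      rwa [if_pos ⟨x, Finset.mem_inter.mpr ⟨hxt, Finset.mem_singleton_self x⟩⟩] at h
    have hB : ∀ x ∈ C \ t, q.run {x} = {x} := by
      intro x hx
      rcases Finset.mem_sdiff.mp hx with ⟨hxC, hxt⟩
      have h := hC x hxC
      simp only [GTTree.run] at h
      rwa [if_neg (by
        rintro ⟨y, hy⟩
        rcases Finset.mem_inter.mp hy with ⟨h1, h2⟩
        exact hxt ((Finset.mem_singleton.mp h2) ▸ h1))] at h
    have h1 := ihp hp _ hA
    have h2 := ihq hq _ hB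
    have hcard : (C ∩ t).card + (C \ t).card = C.card := Finset.card_inter_add_card_sdiff C t
    have hAk : (C ∩ t).card ≤ k := htk ▸ Finset.card_le_card Finset.inter_subset_right
    calc F k C.card = F k ((C ∩ t).card + (C \ t).card) := by rw [hcard]
      _ ≤ 1 + max (F k (C ∩ t).card) (F k (C \ t).card) := F_key hk hAk
      _ ≤ 1 + max p.depth q.depth := Nat.add_le_add_left (max_le_max h1 h2) 1
      _ = (GTTree.node t p q).depth := by simp only [GTTree.depth]; omega

lemma ceil_div_eq {k : ℕ} (hk : 1 ≤ k) (n : ℕ) : ⌈(n : ℚ) / k⌉₊ = (n + k - 1) / k := by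
  have hk' : (0:ℚ) < k := by exact_mod_cast hk
  apply le_antisymm
  · rw [Nat.ceil_le, div_le_iff₀ hk']
    have h := Nat.div_add_mod (n + k - 1) k
    have h2 : (n + k - 1) % k < k := Nat.mod_lt _ (by omega)
    have hcomm : (n + k - 1) / k * k = k * ((n + k - 1) / k) := Nat.mul_comm _ _
    have h3 : n ≤ (n + k - 1) / k * k := by omega
    exact_mod_cast h3
  · have h := Nat.le_ceil ((n:ℚ)/k)
    have h4 : (n:ℚ) ≤ (⌈(n:ℚ)/k⌉₊ : ℚ) * k := by rwa [div_le_iff₀ hk'] at h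
    have hnat : n ≤ ⌈(n:ℚ)/k⌉₊ * k := by exact_mod_cast h4
    have h5 : (n + k - 1) / k < ⌈(n:ℚ)/k⌉₊ + 1 := by
      rw [Nat.div_lt_iff_lt_mul (by omega)]
      calc n + k - 1 < n + k := by omega
        _ ≤ ⌈(n:ℚ)/k⌉₊ * k + k := by omega
        _ = (⌈(n:ℚ)/k⌉₊ + 1) * k := by ring
    omega

theorem stmt11 (k n : ℕ) (hk : 1 ≤ k) (hn : 2 * k - 1 ≤ n) :
    Mfix k 1 n
      = (((⌈(n : ℚ) / k⌉₊ - 2) + Nat.clog 2 (n - (⌈(n : ℚ) / k⌉₊ - 2) * k) : ℕ) : ℕ∞) := by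
  have hcard : (Finset.univ : Finset (Fin n)).card = n := by
    rw [Finset.card_univ, Fintype.card_fin]
  have hMfix : Mfix k 1 n = (F k n : ℕ∞) := by
    apply le_antisymm
    · apply sInf_le
      refine ⟨build k Finset.univ, build_sizeK hk hn n Finset.univ (le_of_eq hcard), ?_, ?_⟩
      · intro D hD
        obtain ⟨x, rfl⟩ := Finset.card_eq_one.mp hD
        exact build_run hk n Finset.univ (le_of_eq hcard) x (Finset.mem_univ x)
      · rw [build_depth hk n Finset.univ (le_of_eq hcard), hcard]
    · apply le_sInf
      rintro c ⟨T, hTk, hTs, rfl⟩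
      have h := lower_bound hk T hTk Finset.univ
        (fun x _ => hTs {x} (Finset.card_singleton x))
      rw [hcard] at h
      exact_mod_cast h
  rw [hMfix]
  apply congrArg (Nat.cast : ℕ → ℕ∞)
  rw [ceil_div_eq hk]
  rcases Nat.lt_or_ge k n with h | h
  · exact F_formula hk n h
  · have hk1 : k = 1 := by omega
    subst hk1
    have hn1 : n = 1 := by omega
    subst hn1
    norm_num [F_le_one]
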